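/- lc(P_4 × P_6) = 18: the grid graph P_4 × P_6 has two disjoint edge sets of size 17 with no adjacent pair between them (so L_17 is not complete), and any two 18-subsets of its edges contain a pair of edges sharing a vertex (so L_18 is complete). -/

import Mathlib

set_option maxRecDepth 20000

open SimpleGraph

def shareVertex {V : Type*} (e f : Sym2 V) : Prop := ∃ v, v ∈ e ∧ v ∈ f

def SuperLineComplete {V : Type*} (G : SimpleGraph V) (r : ℕ) : Prop :=
  ∀ A B : Finset (Sym2 V), ↑A ⊆ G.edgeSet → ↑B ⊆ G.edgeSet →
    A.card = r → B.card = r → A ≠ B →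
    ∃ e ∈ A, ∃ f ∈ B, e ≠ f ∧ shareVertex e f

def lcIs {V : Type*} (G : SimpleGraph V) (k : ℕ) : Prop :=
  IsLeast {r : ℕ | 0 < r ∧ SuperLineComplete G r} k

def gridGraph (n m : ℕ) : SimpleGraph (Fin n × Fin m) :=
  (pathGraph n).boxProd (pathGraph m)

/-! ### basic setup -/

abbrev Vt := Fin 4 × Fin 6

lemma grid_adj (a b : Vt) : (gridGraph 4 6).Adj a b ↔
    ((a.1.val + 1 = b.1.val ∨ b.1.val + 1 = a.1.val) ∧ a.2 = b.2 ∨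
     (a.2.val + 1 = b.2.val ∨ b.2.val + 1 = a.2.val) ∧ a.1 = b.1) := by
  simp [gridGraph, boxProd_adj, pathGraph_adj]

instance gadjDec : DecidableRel (gridGraph 4 6).Adj :=
  fun a b => decidable_of_iff _ (grid_adj a b).symm

instance shareDec {V : Type*} [DecidableEq V] [Fintype V] (e f : Sym2 V) :
    Decidable (shareVertex e f) :=
  decidable_of_iff (∃ v, v ∈ e ∧ v ∈ f) Iff.rfl

/-! ### support -/

def supp (S : Finset (Sym2 Vt)) : Finset Vt :=
  S.biUnion (fun e => Finset.univ.filter (· ∈ e))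

lemma mem_supp {S : Finset (Sym2 Vt)} {v : Vt} : v ∈ supp S ↔ ∃ e ∈ S, v ∈ e := by
  simp [supp]

/-! ### min/max endpoints and classification -/

def vcode (a : Vt) : ℕ := a.1.val + 4 * a.2.val

lemma vcode_inj {a b : Vt} (h : vcode a = vcode b) : a = b := by
  obtain ⟨⟨a1, ha1⟩, ⟨a2, ha2⟩⟩ := a
  obtain ⟨⟨b1, hb1⟩, ⟨b2, hb2⟩⟩ := b
  simp only [vcode] at h
  simp only [Prod.mk.injEq, Fin.mk.injEq]
  omega

def minV : Sym2 Vt → Vt := Sym2.lift ⟨fun a b => if vcode a ≤ vcode b then a else b, by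
  intro a b; dsimp only
  rcases le_or_gt (vcode a) (vcode b) with h | h
  · rcases eq_or_lt_of_le h with h2 | h2
    · simp [h, h2.le, vcode_inj h2]
    · rw [if_pos h, if_neg (by omega)]
  · rw [if_neg (by omega), if_pos h.le]⟩

def maxV : Sym2 Vt → Vt := Sym2.lift ⟨fun a b => if vcode a ≤ vcode b then b else a, by
  intro a b; dsimp only
  rcases le_or_gt (vcode a) (vcode b) with h | h
  · rcases eq_or_lt_of_le h with h2 | h2
    · simp [h, h2.le, vcode_inj h2]
    · rw [if_pos h, if_neg (by omega)]
  · rw [if_neg (by omega), if_pos h.le]⟩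

def cls : Sym2 Vt → ℕ := Sym2.lift ⟨fun a b => if a.2 = b.2 then a.2.val else 6 + min a.2.val b.2.val, by
  intro a b; dsimp only
  rcases eq_or_ne a.2 b.2 with h | h
  · rw [if_pos h, if_pos h.symm, h]
  · rw [if_neg h, if_neg (Ne.symm h), min_comm]⟩

lemma minV_mk (a b : Vt) : minV s(a, b) = if vcode a ≤ vcode b then a else b := rfl
lemma maxV_mk (a b : Vt) : maxV s(a, b) = if vcode a ≤ vcode b then b else a := rfl
lemma cls_mk (a b : Vt) : cls s(a, b) = if a.2 = b.2 then a.2.val else 6 + min a.2.val b.2.val := rfl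

/-- structure of an edge of the grid in terms of `minV`, `maxV`, `cls`. -/
lemma edge_struct (e : Sym2 Vt) (he : e ∈ (gridGraph 4 6).edgeSet) :
    e = s(minV e, maxV e) ∧
    ((cls e ≤ 5 ∧ (minV e).2.val = cls e ∧ (maxV e).2.val = cls e ∧
        (maxV e).1.val = (minV e).1.val + 1) ∨
     (6 ≤ cls e ∧ cls e ≤ 10 ∧ (minV e).2.val + 6 = cls e ∧
        (maxV e).2.val + 5 = cls e ∧ (maxV e).1 = (minV e).1)) := by
  induction e using Sym2.inductionOn with
  | hf a b =>
    rw [SimpleGraph.mem_edgeSet, grid_adj] at he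
    have h25 : a.2.val < 6 := a.2.isLt
    have h25' : b.2.val < 6 := b.2.isLt
    rcases he with ⟨h1, h2⟩ | ⟨h1, h2⟩
    · -- vertical
      have h2v : a.2.val = b.2.val := by rw [h2]
      rcases h1 with h1 | h1
      · have hc : vcode a ≤ vcode b := by unfold vcode; omega
        rw [minV_mk, maxV_mk, cls_mk, if_pos hc, if_pos hc, if_pos h2]
        refine ⟨by rw [Sym2.eq_iff]; tauto, Or.inl ⟨by omega, rfl, by omega, by omega⟩⟩
      · have hc : ¬ vcode a ≤ vcode b := by unfold vcode; omega
        rw [minV_mk, maxV_mk, cls_mk, if_neg hc, if_neg hc, if_pos h2]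
        refine ⟨by rw [Sym2.eq_iff]; tauto, Or.inl ⟨by omega, by omega, by omega, by omega⟩⟩
    · -- horizontal
      have h2v : a.1.val = b.1.val := by rw [h2]
      have hne : a.2 ≠ b.2 := by
        intro h; rw [h] at h1; omega
      rcases h1 with h1 | h1
      · have hc : vcode a ≤ vcode b := by unfold vcode; omega
        rw [minV_mk, maxV_mk, cls_mk, if_pos hc, if_pos hc, if_neg hne]
        refine ⟨by rw [Sym2.eq_iff]; tauto, Or.inr ⟨by omega, by omega, by omega, by omega, h2.symm⟩⟩
      · have hc : ¬ vcode a ≤ vcode b := by unfold vcode; omega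
        rw [minV_mk, maxV_mk, cls_mk, if_neg hc, if_neg hc, if_neg hne]
        refine ⟨by rw [Sym2.eq_iff]; tauto, Or.inr ⟨by omega, by omega, by omega, by omega, h2⟩⟩

lemma minV_mem (e : Sym2 Vt) : minV e ∈ e := by
  induction e using Sym2.inductionOn with
  | hf a b => rw [minV_mk]; split_ifs <;> simp

lemma maxV_mem (e : Sym2 Vt) : maxV e ∈ e := by
  induction e using Sym2.inductionOn with
  | hf a b => rw [maxV_mk]; split_ifs <;> simp

lemma isop (S : Finset (Sym2 Vt)) (hS : ↑S ⊆ (gridGraph 4 6).edgeSet)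
    (h12 : (supp S).card ≤ 12) : S.card ≤ (supp S).card + 5 := by
  classical
  set W := supp S with hWdef
  set w : Fin 6 → ℕ := fun j => (W.filter (fun v => v.2 = j)).card with hwdef
  set c : ℕ → ℕ := fun k => (S.filter (fun e => cls e = k)).card with hcdef
  -- vertex count by columns
  have hW : W.card = ∑ j : Fin 6, w j :=
    Finset.card_eq_sum_card_fiberwise (fun v _ => Finset.mem_univ v.2)
  -- edge count by classes
  have hSsum : S.card = ∑ k ∈ Finset.range 11, c k :=
    Finset.card_eq_sum_card_fiberwise (fun e he => by
      rcases (edge_struct e (hS he)).2 with h | h <;> simp only [Finset.mem_coe, Finset.mem_range] <;> omega)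
  -- columns have at most 4 vertices
  have hw4 : ∀ j : Fin 6, w j ≤ 4 := by
    intro j
    have h1 : (W.filter (fun v => v.2 = j)) ⊆ (Finset.univ.filter (fun v : Vt => v.2 = j)) :=
      Finset.filter_subset_filter _ (Finset.subset_univ W)
    have h2 : (Finset.univ.filter (fun v : Vt => v.2 = j)).card = 4 := by
      have : ∀ j' : Fin 6, (Finset.univ.filter (fun v : Vt => v.2 = j')).card = 4 := by decide
      exact this j
    calc w j ≤ _ := Finset.card_le_card h1
    _ = 4 := h2
  -- membership of endpoints in supp
  have hmem : ∀ e ∈ S, minV e ∈ W ∧ maxV e ∈ W := by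
    intro e he
    exact ⟨mem_supp.2 ⟨e, he, minV_mem e⟩, mem_supp.2 ⟨e, he, maxV_mem e⟩⟩
  -- vertical bound
  have hv : ∀ j : Fin 6, c j.val = 0 ∨ c j.val + 1 ≤ w j := by
    intro j
    rcases Nat.eq_zero_or_pos (c j.val) with h0 | hpos
    · exact Or.inl h0
    right
    set Sv := S.filter (fun e => cls e = j.val) with hSv
    have hSvne : Sv.Nonempty := Finset.card_pos.1 hpos
    -- facts about members of Sv
    have hfact : ∀ e ∈ Sv, e = s(minV e, maxV e) ∧ (minV e).2 = j ∧ (maxV e).2 = j ∧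
        (maxV e).1.val = (minV e).1.val + 1 ∧ minV e ∈ W ∧ maxV e ∈ W := by
      intro e he
      rw [hSv, Finset.mem_filter] at he
      obtain ⟨heS, hecls⟩ := he
      obtain ⟨heq, hstr | hstr⟩ := edge_struct e (hS heS)
      · obtain ⟨hm, hM⟩ := hmem e heS
        refine ⟨heq, Fin.ext (by omega), Fin.ext (by omega), by omega, hm, hM⟩
      · omega
    set Wj := W.filter (fun v => v.2 = j) with hWj
    have hWjne : Wj.Nonempty := by
      obtain ⟨e, he⟩ := hSvne
      obtain ⟨_, h1, _, _, h4, _⟩ := hfact e he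
      exact ⟨minV e, Finset.mem_filter.2 ⟨h4, h1⟩⟩
    obtain ⟨m, hmW, hmax⟩ := Finset.exists_max_image Wj (fun v => v.1.val) hWjne
    have hle : Sv.card ≤ (Wj.erase m).card := by
      apply Finset.card_le_card_of_injOn minV
      · intro e he
        obtain ⟨_, h1, h2, h3, h4, h5⟩ := hfact e he
        have hmaxmem : maxV e ∈ Wj := Finset.mem_filter.2 ⟨h5, h2⟩
        refine Finset.mem_erase.2 ⟨?_, Finset.mem_filter.2 ⟨h4, h1⟩⟩
        intro hcontra
        have := hmax (maxV e) hmaxmem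
        rw [hcontra] at h3; omega
      · intro e he f hf hef
        obtain ⟨heq, h1, h2, h3, _, _⟩ := hfact e he
        obtain ⟨heq', h1', h2', h3', _, _⟩ := hfact f hf
        have : maxV e = maxV f := by
          have : (maxV e).1 = (maxV f).1 := Fin.ext (by rw [h3, h3', hef])
          exact Prod.ext this (by rw [h2, h2'])
        rw [heq, heq', hef, this]
    have hm' : m ∈ Wj := hmW
    rw [Finset.card_erase_of_mem hm'] at hle
    have h1W : 1 ≤ Wj.card := Finset.card_pos.2 ⟨m, hm'⟩
    have hcc : c j.val = Sv.card := rfl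
    have hww : w j = Wj.card := rfl
    omega
  -- horizontal bound
  have hh : ∀ j1 j2 : Fin 6, j2.val = j1.val + 1 →
      c (6 + j1.val) ≤ w j1 ∧ c (6 + j1.val) ≤ w j2 := by
    intro j1 j2 hj
    set Sh := S.filter (fun e => cls e = 6 + j1.val) with hSh
    have hfact : ∀ e ∈ Sh, e = s(minV e, maxV e) ∧ (minV e).2 = j1 ∧ (maxV e).2 = j2 ∧
        (maxV e).1 = (minV e).1 ∧ minV e ∈ W ∧ maxV e ∈ W := by
      intro e he
      rw [hSh, Finset.mem_filter] at he
      obtain ⟨heS, hecls⟩ := he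
      obtain ⟨heq, hstr | hstr⟩ := edge_struct e (hS heS)
      · omega
      · obtain ⟨hm, hM⟩ := hmem e heS
        exact ⟨heq, Fin.ext (by omega), Fin.ext (by omega), hstr.2.2.2.2, hm, hM⟩
    constructor
    · apply Finset.card_le_card_of_injOn minV
      · intro e he
        obtain ⟨_, h1, _, _, h4, _⟩ := hfact e he
        exact Finset.mem_filter.2 ⟨h4, h1⟩
      · intro e he f hf hef
        obtain ⟨heq, h1, h2, h3, _, _⟩ := hfact e he
        obtain ⟨heq', h1', h2', h3', _, _⟩ := hfact f hf
        have : maxV e = maxV f := Prod.ext (by rw [h3, h3', hef]) (by rw [h2, h2'])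
        rw [heq, heq', hef, this]
    · apply Finset.card_le_card_of_injOn maxV
      · intro e he
        obtain ⟨_, _, h2, _, _, h5⟩ := hfact e he
        exact Finset.mem_filter.2 ⟨h5, h2⟩
      · intro e he f hf hef
        obtain ⟨heq, h1, h2, h3, _, _⟩ := hfact e he
        obtain ⟨heq', h1', h2', h3', _, _⟩ := hfact f hf
        have : minV e = minV f := Prod.ext (by rw [← h3, ← h3', hef]) (by rw [h1, h1'])
        rw [heq, heq', hef, this]
  -- put together
  have hv0 : c 0 = 0 ∨ c 0 + 1 ≤ w 0 := hv 0
  have hv1 : c 1 = 0 ∨ c 1 + 1 ≤ w 1 := hv 1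
  have hv2 : c 2 = 0 ∨ c 2 + 1 ≤ w 2 := hv 2
  have hv3 : c 3 = 0 ∨ c 3 + 1 ≤ w 3 := hv 3
  have hv4 : c 4 = 0 ∨ c 4 + 1 ≤ w 4 := hv 4
  have hv5 : c 5 = 0 ∨ c 5 + 1 ≤ w 5 := hv 5
  have hh0 : c 6 ≤ w 0 ∧ c 6 ≤ w 1 := hh 0 1 rfl
  have hh1 : c 7 ≤ w 1 ∧ c 7 ≤ w 2 := hh 1 2 rfl
  have hh2 : c 8 ≤ w 2 ∧ c 8 ≤ w 3 := hh 2 3 rfl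
  have hh3 : c 9 ≤ w 3 ∧ c 9 ≤ w 4 := hh 3 4 rfl
  have hh4 : c 10 ≤ w 4 ∧ c 10 ≤ w 5 := hh 4 5 rfl
  have hw0 := hw4 0; have hw1 := hw4 1; have hw2 := hw4 2
  have hw3 := hw4 3; have hw4' := hw4 4; have hw5 := hw4 5
  have hWc : W.card = w 0 + w 1 + w 2 + w 3 + w 4 + w 5 := by
    rw [hW, Fin.sum_univ_six]
  have hSc : S.card = c 0 + c 1 + c 2 + c 3 + c 4 + c 5 + c 6 + c 7 + c 8 + c 9 + c 10 := by
    rw [hSsum]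
    simp [Finset.sum_range_succ]
  rw [hWc] at h12
  rw [hWc, hSc]
  omega

/-! ### matching / disjointness facts -/

lemma supp_disj {S T : Finset (Sym2 Vt)} (h : ∀ e ∈ S, ∀ f ∈ T, ¬ shareVertex e f) :
    Disjoint (supp S) (supp T) := by
  rw [Finset.disjoint_left]
  intro v hv hv'
  obtain ⟨e, he, hve⟩ := mem_supp.1 hv
  obtain ⟨f, hf, hvf⟩ := mem_supp.1 hv'
  exact h e he f hf ⟨v, hve, hvf⟩

lemma supp_matching_card {K : Finset (Sym2 Vt)} (hK : ↑K ⊆ (gridGraph 4 6).edgeSet)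
    (hm : ∀ e ∈ K, ∀ f ∈ K, e ≠ f → ¬ shareVertex e f) : 2 * K.card ≤ (supp K).card := by
  unfold supp
  rw [Finset.card_biUnion]
  · have h2 : ∀ e ∈ K, (Finset.univ.filter (· ∈ e)).card = 2 := by
      intro e he
      have hedge : e ∈ (gridGraph 4 6).edgeSet := hK he
      induction e using Sym2.inductionOn with
      | hf a b =>
        have hadj : (gridGraph 4 6).Adj a b := hedge
        have hne : a ≠ b := hadj.ne
        have : (Finset.univ.filter (· ∈ s(a,b))) = {a, b} := by
          ext v; simp [Sym2.mem_iff]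
        rw [this, Finset.card_pair hne]
    rw [Finset.sum_congr rfl h2, Finset.sum_const, smul_eq_mul, mul_comm]
  · intro e he f hf hef
    rw [Function.onFun, Finset.disjoint_left]
    intro v hv hv'
    exact hm e he f hf hef
      ⟨v, (Finset.mem_filter.1 hv).2, (Finset.mem_filter.1 hv').2⟩

lemma aux_contra (P Q K : Finset (Sym2 Vt)) (hP : ↑P ⊆ (gridGraph 4 6).edgeSet)
    (hPcard : P.card + K.card = 18)
    (hle : (supp P).card ≤ (supp Q).card)
    (hsum : (supp P).card + (supp Q).card + 2 * K.card ≤ 24) : False := by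
  have h12 : (supp P).card ≤ 12 := by omega
  have hiso := isop P hP h12
  omega

/-! ### SuperLineComplete 18 -/

lemma slc18 : SuperLineComplete (gridGraph 4 6) 18 := by
  intro A B hA hB hAc hBc hne
  by_contra hcon
  push_neg at hcon
  classical
  set P := A \ B with hP
  set Q := B \ A with hQ
  set K := A ∩ B with hK
  have hPsub : ↑P ⊆ (gridGraph 4 6).edgeSet :=
    Set.Subset.trans (by exact_mod_cast Finset.coe_subset.2 (Finset.sdiff_subset)) hA
  have hQsub : ↑Q ⊆ (gridGraph 4 6).edgeSet :=
    Set.Subset.trans (by exact_mod_cast Finset.coe_subset.2 (Finset.sdiff_subset)) hB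
  have hKsub : ↑K ⊆ (gridGraph 4 6).edgeSet :=
    Set.Subset.trans (by exact_mod_cast Finset.coe_subset.2 (Finset.inter_subset_left)) hA
  have hPQ : ∀ e ∈ P, ∀ f ∈ Q, ¬ shareVertex e f := by
    intro e he f hf
    have he' := Finset.mem_sdiff.1 he
    have hf' := Finset.mem_sdiff.1 hf
    exact hcon e he'.1 f hf'.1 (fun h => he'.2 (h ▸ hf'.1))
  have hPK : ∀ e ∈ P, ∀ f ∈ K, ¬ shareVertex e f := by
    intro e he f hf
    have he' := Finset.mem_sdiff.1 he
    have hf' := Finset.mem_inter.1 hf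
    exact hcon e he'.1 f hf'.2 (fun h => he'.2 (h ▸ hf'.2))
  have hKQ : ∀ e ∈ K, ∀ f ∈ Q, ¬ shareVertex e f := by
    intro e he f hf
    have he' := Finset.mem_inter.1 he
    have hf' := Finset.mem_sdiff.1 hf
    exact hcon e he'.1 f hf'.1 (fun h => hf'.2 (h ▸ he'.1))
  have hKK : ∀ e ∈ K, ∀ f ∈ K, e ≠ f → ¬ shareVertex e f := by
    intro e he f hf hef
    exact hcon e (Finset.mem_inter.1 he).1 f (Finset.mem_inter.1 hf).2 hef
  have d1 : Disjoint (supp P) (supp Q) := supp_disj hPQ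
  have d2 : Disjoint (supp P) (supp K) := supp_disj hPK
  have d3 : Disjoint (supp K) (supp Q) := supp_disj hKQ
  -- total vertex count
  have hsum : (supp P).card + (supp Q).card + (supp K).card ≤ 24 := by
    have hU : (supp P ∪ supp Q ∪ supp K).card
        = (supp P).card + (supp Q).card + (supp K).card := by
      rw [Finset.card_union_of_disjoint, Finset.card_union_of_disjoint d1]
      rw [Finset.disjoint_union_left]
      exact ⟨d2, d3.symm⟩
    have h24 : (supp P ∪ supp Q ∪ supp K).card ≤ 24 := by
      have := Finset.card_le_univ (supp P ∪ supp Q ∪ supp K)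
      simpa using this
    omega
  have hmatch : 2 * K.card ≤ (supp K).card := supp_matching_card hKsub hKK
  have hPc : P.card + K.card = 18 := by
    rw [hP, hK]; rw [Finset.card_sdiff_add_card_inter, hAc]
  have hQc : Q.card + K.card = 18 := by
    rw [hQ, hK, Finset.inter_comm]; rw [Finset.card_sdiff_add_card_inter, hBc]
  rcases le_total (supp P).card (supp Q).card with hle | hle
  · exact aux_contra P Q K hPsub hPc hle (by omega)
  · exact aux_contra Q P K hQsub hQc hle (by omega)

/-! ### explicit extremal sets -/

def Cset : Finset (Sym2 Vt) :=
  {s((0,0),(1,0)), s((1,0),(2,0)), s((2,0),(3,0)), s((0,1),(1,1)), s((1,1),(2,1)), s((2,1),(3,1)), s((0,2),(1,2)), s((1,2),(2,2)), s((2,2),(3,2)), s((0,0),(0,1)), s((1,0),(1,1)), s((2,0),(2,1)), s((3,0),(3,1)), s((0,1),(0,2)), s((1,1),(1,2)), s((2,1),(2,2)), s((3,1),(3,2))}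
def Dset : Finset (Sym2 Vt) :=
  {s((0,3),(1,3)), s((1,3),(2,3)), s((2,3),(3,3)), s((0,4),(1,4)), s((1,4),(2,4)), s((2,4),(3,4)), s((0,5),(1,5)), s((1,5),(2,5)), s((2,5),(3,5)), s((0,3),(0,4)), s((1,3),(1,4)), s((2,3),(2,4)), s((3,3),(3,4)), s((0,4),(0,5)), s((1,4),(1,5)), s((2,4),(2,5)), s((3,4),(3,5))}

lemma hC_edge : ∀ e ∈ Cset, e ∈ (gridGraph 4 6).edgeSet := by decide
lemma hD_edge : ∀ e ∈ Dset, e ∈ (gridGraph 4 6).edgeSet := by decide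
lemma hCcard : Cset.card = 17 := by decide
lemma hDcard : Dset.card = 17 := by decide
lemma hCDdisj : Disjoint Cset Dset := by decide
lemma hnoshare : ∀ c ∈ Cset, ∀ d ∈ Dset, ¬ shareVertex c d := by decide

/-! ### main theorem -/

theorem lc_grid_four_six :
    (∃ C D : Finset (Sym2 (Fin 4 × Fin 6)),
      ↑C ⊆ (gridGraph 4 6).edgeSet ∧ ↑D ⊆ (gridGraph 4 6).edgeSet ∧
      Disjoint C D ∧ C.card = 17 ∧ D.card = 17 ∧
      ∀ c ∈ C, ∀ d ∈ D, ¬ shareVertex c d) ∧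
    SuperLineComplete (gridGraph 4 6) 18 ∧
    lcIs (gridGraph 4 6) 18 := by
  have hCsub : ↑Cset ⊆ (gridGraph 4 6).edgeSet := fun e he => hC_edge e (by exact_mod_cast he)
  have hDsub : ↑Dset ⊆ (gridGraph 4 6).edgeSet := fun e he => hD_edge e (by exact_mod_cast he)
  refine ⟨⟨Cset, Dset, hCsub, hDsub, hCDdisj, hCcard, hDcard, hnoshare⟩, slc18,
    ⟨⟨by norm_num, slc18⟩, ?_⟩⟩
  rintro r ⟨hr0, hslc⟩
  by_contra hlt
  push_neg at hlt
  have hr17 : r ≤ 17 := by omega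
  obtain ⟨Af, hAsub, hAcard⟩ := Finset.exists_subset_card_eq (show r ≤ Cset.card by rw [hCcard]; omega)
  obtain ⟨Bf, hBsub, hBcard⟩ := Finset.exists_subset_card_eq (show r ≤ Dset.card by rw [hDcard]; omega)
  have hne : Af ≠ Bf := by
    intro h
    obtain ⟨x, hx⟩ := Finset.card_pos.1 (show 0 < Af.card by omega)
    exact (Finset.disjoint_left.1 hCDdisj (hAsub hx)) (hBsub (h ▸ hx))
  obtain ⟨e, he, f, hf, hef, hsh⟩ := hslc Af Bf
    (Set.Subset.trans (by exact_mod_cast Finset.coe_subset.2 hAsub) hCsub)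
    (Set.Subset.trans (by exact_mod_cast Finset.coe_subset.2 hBsub) hDsub)
    hAcard hBcard hne
  exact hnoshare e (hAsub he) f (hBsub hf) hsh
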